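/- Fix K, M, ρ ∈ [0,1), ξ ∈ (0,1], γ₀ > 0 and β_1,…,β_K > 0, and for real N > max(K,M) set T = N, a = M/N, b = K/N, φ = 1−b, ϖ = a·b·(1−ξ)². On the set of N for which φ·κ²·(1−a) − ϖ > 0, the map N ↦ R_k(N) is strictly increasing, the map N ↦ C̄(N) is nonincreasing, and hence the secrecy-rate lower bound N ↦ R_sec(N) = max(R_k(N) − C̄(N), 0) is monotonically nondecreasing in N. -/

import Mathlib

private lemma cbar_frac_aux (M ξ κ βk S u1 u2 v1 v2 w : ℝ)
    (hM : 0 ≤ M) (hξ : 0 ≤ ξ) (hκ : 0 ≤ κ) (hβ : 0 ≤ βk) (hS : 0 < S) (hw : 0 ≤ w)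
    (hu21 : u2 ≤ u1) (hv21 : v2 ≤ v1) (hu11 : u1 < 1) (hu20 : 0 ≤ u2) (hv20 : 0 ≤ v2)
    (hD1 : 0 < (1 - u1) * κ ^ 2 * (1 - v1) - v1 * u1 * w)
    (hD2 : 0 < (1 - u2) * κ ^ 2 * (1 - v2) - v2 * u2 * w) :
    ((1 - u2) * M * ξ * κ * βk / S) / ((1 - u2) * κ ^ 2 * (1 - v2) - v2 * u2 * w)
      ≤ ((1 - u1) * M * ξ * κ * βk / S) / ((1 - u1) * κ ^ 2 * (1 - v1) - v1 * u1 * w) := by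
  have hu1le : 0 ≤ 1 - u1 := by linarith
  have hu2le : 0 ≤ 1 - u2 := by linarith
  have hc0 : 0 ≤ M * ξ * κ * βk / S := by positivity
  have key : (1 - u2) * ((1 - u1) * κ ^ 2 * (1 - v1) - v1 * u1 * w)
      ≤ (1 - u1) * ((1 - u2) * κ ^ 2 * (1 - v2) - v2 * u2 * w) := by
    have h1 : 0 ≤ (1 - u1) * (1 - u2) * κ ^ 2 * (v1 - v2) := by
      have hv : 0 ≤ v1 - v2 := by linarith
      positivity
    have hA : (1 - u1) * u2 ≤ (1 - u2) * u1 := by nlinarith [hu21]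
    have hu10 : 0 ≤ u1 := le_trans hu20 hu21
    have h2 : (1 - u1) * u2 * v2 ≤ (1 - u2) * u1 * v1 :=
      mul_le_mul hA hv21 hv20 (mul_nonneg hu2le hu10)
    nlinarith [h1, h2]
  rw [div_le_div_iff₀ hD2 hD1]
  calc (1 - u2) * M * ξ * κ * βk / S * ((1 - u1) * κ ^ 2 * (1 - v1) - v1 * u1 * w)
      = (M * ξ * κ * βk / S) * ((1 - u2) * ((1 - u1) * κ ^ 2 * (1 - v1) - v1 * u1 * w)) := by
        ring
    _ ≤ (M * ξ * κ * βk / S) * ((1 - u1) * ((1 - u2) * κ ^ 2 * (1 - v2) - v2 * u2 * w)) :=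
        mul_le_mul_of_nonneg_left key hc0
    _ = (1 - u1) * M * ξ * κ * βk / S * ((1 - u2) * κ ^ 2 * (1 - v2) - v2 * u2 * w) := by
        ring

/-- with `T = N`, on the set of (real) `N > max(K,M)` where
`φ·κ²·(1−a) − ϖ > 0`, the user-rate lower bound `N ↦ R_k(N)` is strictly increasing,
the eavesdropper-rate upper bound `N ↦ C̄(N)` is nonincreasing, and the secrecy-rate
lower bound `N ↦ max (R_k(N) − C̄(N)) 0` is monotonically nondecreasing in `N`. -/
theorem stmt_4 (K : ℕ) (hK : 0 < K) (β : Fin K → ℝ) (hβ : ∀ i, 0 < β i) (k : Fin K)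
    (M : ℝ) (hM : 0 < M)
    (ρ ξ γ₀ : ℝ) (hρ : ρ ∈ Set.Ico (0 : ℝ) 1) (hξ : ξ ∈ Set.Ioc (0 : ℝ) 1) (hγ₀ : 0 < γ₀)
    (S ρ' κ : ℝ) (hS : S = ∑ i, β i) (hρ' : ρ' = ρ / (1 - ρ)) (hκ : κ = 1 - ξ + ρ')
    (Rk Cbar : ℝ → ℝ)
    (hRk : ∀ N : ℝ, Rk N = Real.logb 2 (1 +
      ((1 - ρ) * (β k) ^ 2 * γ₀ * ξ * N / S) /
        ((1 - ρ) * ξ * γ₀ * (β k) * N * (∑ j ∈ Finset.univ.erase k, β j) / (N * S)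
          + ρ * (β k) * γ₀ + 1)))
    (hCbar : ∀ N : ℝ, Cbar N = Real.logb 2 (1 +
      ((1 - K / N) * M * ξ * κ * (β k) / S) /
        ((1 - K / N) * κ ^ 2 * (N / N - M / N) - (M / N) * (K / N) * (1 - ξ) ^ 2)))
    (goodSet : Set ℝ)
    (hgood : goodSet = {N : ℝ | max (K : ℝ) M < N ∧
      0 < (1 - K / N) * κ ^ 2 * (1 - M / N) - (M / N) * (K / N) * (1 - ξ) ^ 2}) :
    StrictMonoOn Rk goodSet ∧ AntitoneOn Cbar goodSet ∧
    MonotoneOn (fun N => max (Rk N - Cbar N) 0) goodSet := by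
  obtain ⟨hρ0, hρ1⟩ := hρ
  obtain ⟨hξ0, hξ1⟩ := hξ
  have hβk := hβ k
  have hS0 : 0 < S := by
    rw [hS]; exact Finset.sum_pos (fun i _ => hβ i) ⟨k, Finset.mem_univ k⟩
  have hρ'0 : 0 ≤ ρ' := by rw [hρ']; exact div_nonneg hρ0 (by linarith)
  have hκ0 : 0 ≤ κ := by rw [hκ]; linarith
  have hE0 : 0 ≤ ∑ j ∈ Finset.univ.erase k, β j :=
    Finset.sum_nonneg (fun i _ => (hβ i).le)
  have hK0 : (0:ℝ) < K := by exact_mod_cast hK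
  -- membership facts
  have hmem : ∀ N ∈ goodSet, (K:ℝ) < N ∧ M < N ∧ 0 < N ∧
      0 < (1 - K / N) * κ ^ 2 * (1 - M / N) - (M / N) * (K / N) * (1 - ξ) ^ 2 := by
    intro N hN
    rw [hgood] at hN
    obtain ⟨h1, h2⟩ := hN
    have hKN : (K:ℝ) < N := lt_of_le_of_lt (le_max_left _ _) h1
    have hMN : M < N := lt_of_le_of_lt (le_max_right _ _) h1
    exact ⟨hKN, hMN, lt_trans hK0 hKN, h2⟩
  -- Strict monotonicity of Rk
  have hRkMono : StrictMonoOn Rk goodSet := by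
    intro a ha b hb hab
    obtain ⟨hKa, hMa, ha0, -⟩ := hmem a ha
    obtain ⟨hKb, hMb, hb0, -⟩ := hmem b hb
    rw [hRk a, hRk b]
    set E := ∑ j ∈ Finset.univ.erase k, β j with hE
    have hden : ∀ N : ℝ, 0 < N →
        (1 - ρ) * ξ * γ₀ * (β k) * N * E / (N * S) + ρ * (β k) * γ₀ + 1
          = (1 - ρ) * ξ * γ₀ * (β k) * E / S + ρ * (β k) * γ₀ + 1 := by
      intro N hN
      have hN' : N ≠ 0 := ne_of_gt hN
      have hS' : S ≠ 0 := ne_of_gt hS0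
      field_simp
    rw [hden a ha0, hden b hb0]
    set d := (1 - ρ) * ξ * γ₀ * (β k) * E / S + ρ * (β k) * γ₀ + 1 with hd
    have hp : 0 < (1 - ρ) := by linarith
    have hd0 : 0 < d := by
      have h1 : 0 ≤ (1 - ρ) * ξ * γ₀ * (β k) * E / S :=
        div_nonneg (mul_nonneg (mul_nonneg (mul_nonneg (mul_nonneg hp.le hξ0.le) hγ₀.le)
          hβk.le) hE0) hS0.le
      have h2 : 0 ≤ ρ * (β k) * γ₀ := by positivity
      rw [hd]; linarith
    have hc : 0 < (1 - ρ) * (β k) ^ 2 * γ₀ * ξ := by positivity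
    have hnum : (1 - ρ) * (β k) ^ 2 * γ₀ * ξ * a / S < (1 - ρ) * (β k) ^ 2 * γ₀ * ξ * b / S :=
      (div_lt_div_iff_of_pos_right hS0).mpr (by nlinarith)
    have hxnn : 0 ≤ (1 - ρ) * (β k) ^ 2 * γ₀ * ξ * a / S :=
      div_nonneg (mul_nonneg hc.le ha0.le) hS0.le
    have hfr : ((1 - ρ) * (β k) ^ 2 * γ₀ * ξ * a / S) / d
        < ((1 - ρ) * (β k) ^ 2 * γ₀ * ξ * b / S) / d :=
      (div_lt_div_iff_of_pos_right hd0).mpr hnum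
    have hposa : 0 < 1 + ((1 - ρ) * (β k) ^ 2 * γ₀ * ξ * a / S) / d := by
      have := div_nonneg hxnn hd0.le
      linarith
    exact Real.logb_lt_logb (by norm_num) hposa (by linarith)
  -- Antitonicity of Cbar
  have hCbarAnti : AntitoneOn Cbar goodSet := by
    intro a ha b hb hab
    obtain ⟨hKa, hMa, ha0, hDa⟩ := hmem a ha
    obtain ⟨hKb, hMb, hb0, hDb⟩ := hmem b hb
    rw [hCbar a, hCbar b]
    rw [div_self (ne_of_gt ha0), div_self (ne_of_gt hb0)]
    have hu21 : (K:ℝ) / b ≤ (K:ℝ) / a := div_le_div_of_nonneg_left hK0.le ha0 hab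
    have hv21 : M / b ≤ M / a := div_le_div_of_nonneg_left hM.le ha0 hab
    have hu11 : (K:ℝ) / a < 1 := (div_lt_one ha0).mpr hKa
    have hfrac := cbar_frac_aux M ξ κ (β k) S ((K:ℝ)/a) ((K:ℝ)/b) (M/a) (M/b) ((1-ξ)^2)
      hM.le hξ0.le hκ0 hβk.le hS0 (by positivity) hu21 hv21 hu11 (by positivity)
      (by positivity) hDa hDb
    have hposb : 0 < 1 + ((1 - (K:ℝ) / b) * M * ξ * κ * (β k) / S) /
        ((1 - (K:ℝ) / b) * κ ^ 2 * (1 - M / b) - M / b * ((K:ℝ) / b) * (1 - ξ) ^ 2) := by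
      have hnn : 0 ≤ (1 - (K:ℝ) / b) * M * ξ * κ * (β k) / S := by
        have hu2 : (0:ℝ) ≤ 1 - (K:ℝ) / b := by
          have : (K:ℝ) / b ≤ (K:ℝ) / a := hu21
          linarith
        positivity
      have := div_nonneg hnn hDb.le
      linarith
    apply Real.logb_le_logb_of_le (by norm_num) hposb
    linarith [hfrac]
  refine ⟨hRkMono, hCbarAnti, ?_⟩
  intro a ha b hb hab
  have h1 : Rk a ≤ Rk b := hRkMono.monotoneOn ha hb hab
  have h2 : Cbar b ≤ Cbar a := hCbarAnti ha hb hab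
  simp only
  exact max_le_max (by linarith) le_rfl
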